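/- Under the right action of Röver's group V𝒢 on the vertex set 𝒫 given by [f]·g = [f ∘ g], the stabilizer of a vertex [f] of rank n is precisely the group f⁻¹ K_n f = {f⁻¹ ∘ k ∘ f : k ∈ K_n}; in particular it is finite of order n! · 4ⁿ. -/

import Mathlib

/-! Basic setup: the Cantor set `Δ = ℕ → Bool` and `C n = Fin n × Δ`,
the disjoint union of `n` copies of the Cantor set. -/

abbrev Δ : Type := ℕ → Bool
abbrev C (n : ℕ) : Type := Fin n × Δ

/-- A bijection between discrete spaces, as a homeomorphism. -/
def discHomeo {X Y : Type*} [TopologicalSpace X] [TopologicalSpace Y]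
    [DiscreteTopology X] [DiscreteTopology Y] (e : X ≃ Y) : X ≃ₜ Y :=
  ⟨e, continuous_of_discreteTopology, continuous_of_discreteTopology⟩

/-- The permutation homeomorphism `p_α : C n ≃ₜ C n`, permuting the copies
of the Cantor set according to `α`. -/
def permC {n : ℕ} (α : Equiv.Perm (Fin n)) : C n ≃ₜ C n :=
  (discHomeo α).prodCongr (Homeomorph.refl Δ)

/-- Cast between `C m` and `C n` when `m = n`. -/
def castC {m n : ℕ} (h : m = n) : C m ≃ₜ C n :=
  (discHomeo (finCongr h)).prodCongr (Homeomorph.refl Δ)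

/-- `C (m + n)` is the disjoint union of `C m` and `C n` (first `m` copies,
then the remaining `n` copies). -/
def toSum (m n : ℕ) : C (m + n) ≃ₜ (C m) ⊕ (C n) :=
  ((discHomeo finSumFinEquiv.symm).prodCongr (Homeomorph.refl Δ)).trans
    (Homeomorph.sumProdDistrib)

/-- The direct sum `f ⊕ g` of homeomorphisms, acting as `f` on the first `m`
copies (sent to the first `m'` copies) and as `g` on the last `n` copies. -/
def dsum {m m' n n' : ℕ} (f : C m ≃ₜ C m') (g : C n ≃ₜ C n') :
    C (m + n) ≃ₜ C (m' + n') :=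
  ((toSum m n).trans (f.sumCongr g)).trans (toSum m' n').symm

/-- The split homeomorphism `x : C 1 ≃ₜ C 2`: a sequence starting with letter
`i` is sent to the `(i+1)`-st copy of the Cantor set, deleting the first letter. -/
def split : C 1 ≃ₜ C 2 where
  toFun p := (finTwoEquiv.symm (p.2 0), fun k => p.2 (k + 1))
  invFun p := (0, fun k => Nat.casesOn k (finTwoEquiv p.1) (fun j => p.2 j))
  left_inv := by
    rintro ⟨i, w⟩
    refine Prod.ext (Subsingleton.elim _ _) ?_
    funext k
    cases k <;> simp
  right_inv := by
    rintro ⟨i, w⟩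
    refine Prod.ext ?_ rfl
    simp
  continuous_toFun := by
    refine Continuous.prodMk ?_ ?_
    · exact Continuous.comp continuous_of_discreteTopology
        ((continuous_apply 0).comp continuous_snd)
    · exact continuous_pi fun k => (continuous_apply (k + 1)).comp continuous_snd
  continuous_invFun := by
    refine Continuous.prodMk continuous_const ?_
    refine continuous_pi fun k => ?_
    cases k with
    | zero => exact Continuous.comp continuous_of_discreteTopology continuous_fst
    | succ j => exact (continuous_apply j).comp continuous_snd

/-- The split homeomorphism `x_i^{(n)} = id_{i-1} ⊕ x ⊕ id_{n-i} : C n ≃ₜ C (n+1)`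
(with `i` zero-indexed, so `i : Fin n` splits the `(i+1)`-st copy). -/
def splitAt {n : ℕ} (i : Fin n) : C n ≃ₜ C (n + 1) :=
  ((castC (show n = (i : ℕ) + 1 + (n - 1 - i) by have := i.isLt; omega)).trans
    (dsum (dsum (Homeomorph.refl (C i)) split) (Homeomorph.refl (C (n - 1 - i))))).trans
    (castC (show (i : ℕ) + 2 + (n - 1 - i) = n + 1 by have := i.isLt; omega))

/-- `IsForest f` says that `f : C m ≃ₜ C n` is a binary forest, i.e. a
(possibly empty) composition of split homeomorphisms.  A binary tree is a
binary forest with domain `C 1`. -/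
inductive IsForest : ∀ {m n : ℕ}, (C m ≃ₜ C n) → Prop where
  | refl (m : ℕ) : IsForest (Homeomorph.refl (C m))
  | step {m n : ℕ} {f : C m ≃ₜ C n} (i : Fin n) (hf : IsForest f) :
      IsForest (f.trans (splitAt i))

/-! The Grigorchuk generators `σ, b, c, d`, defined via the Grigorchuk automaton:
on binary sequences, `σ` flips the first letter, and `b(0w)=0σ(w)`, `b(1w)=1c(w)`,
`c(0w)=0σ(w)`, `c(1w)=1d(w)`, `d(0w)=0w`, `d(1w)=1b(w)`. -/

/-- States of the Grigorchuk automaton: the identity, `σ`, `b`, `c`, `d`. -/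
inductive GS : Type | e | s | b | c | d
deriving DecidableEq

instance : Fintype GS :=
  ⟨{.e, .s, .b, .c, .d}, by intro x; cases x <;> decide⟩

instance : TopologicalSpace GS := ⊥
instance : DiscreteTopology GS := ⟨rfl⟩

/-- Output function of the Grigorchuk automaton. -/
def GS.out : GS → Bool → Bool
  | .s, i => !i
  | _,  i => i

/-- Transition function of the Grigorchuk automaton. -/
def GS.step : GS → Bool → GS
  | .e, _ => .e
  | .s, _ => .e
  | .b, false => .s
  | .b, true  => .c
  | .c, false => .s
  | .c, true  => .d
  | .d, false => .e
  | .d, true  => .b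

/-- The state of the automaton started in state `g` after reading `w 0, …, w (n-1)`. -/
def GS.stArr (g : GS) (w : Δ) : ℕ → GS
  | 0 => g
  | n + 1 => (GS.stArr g w n).step (w n)

/-- The action of the automaton state `g` on infinite binary sequences. -/
def GS.act (g : GS) (w : Δ) : Δ := fun n => (GS.stArr g w n).out (w n)

lemma GS.out_out : ∀ (g : GS) (i : Bool), g.out (g.out i) = i := by decide

lemma GS.step_out : ∀ (g : GS) (i : Bool), g.step (g.out i) = g.step i := by decide

lemma GS.stArr_act (g : GS) (w : Δ) : ∀ n, GS.stArr g (GS.act g w) n = GS.stArr g w n := by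
  intro n
  induction n with
  | zero => rfl
  | succ n ih => rw [GS.stArr, GS.stArr, ih, GS.act, GS.step_out]

lemma GS.act_act (g : GS) (w : Δ) : GS.act g (GS.act g w) = w := by
  funext n
  rw [GS.act, GS.stArr_act, GS.act, GS.out_out]

lemma GS.continuous_stArr (g : GS) (n : ℕ) : Continuous (fun w : Δ => GS.stArr g w n) := by
  induction n with
  | zero => exact continuous_const
  | succ n ih =>
      exact Continuous.comp (f := fun w : Δ => ((GS.stArr g w n), w n))
        (g := fun p : GS × Bool => p.1.step p.2)
        continuous_of_discreteTopology (ih.prodMk (continuous_apply n))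

lemma GS.continuous_act (g : GS) : Continuous (GS.act g) := by
  refine continuous_pi fun n => ?_
  exact Continuous.comp (f := fun w : Δ => ((GS.stArr g w n), w n))
    (g := fun p : GS × Bool => p.1.out p.2)
    continuous_of_discreteTopology ((GS.continuous_stArr g n).prodMk (continuous_apply n))

/-- The homeomorphism of the Cantor set determined by an automaton state. -/
def GS.homeo (g : GS) : Δ ≃ₜ Δ where
  toFun := GS.act g
  invFun := GS.act g
  left_inv := GS.act_act g
  right_inv := GS.act_act g
  continuous_toFun := GS.continuous_act g
  continuous_invFun := GS.continuous_act g

/-- Lift a homeomorphism of the Cantor set to `C 1`. -/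
def liftC1 (h : Δ ≃ₜ Δ) : C 1 ≃ₜ C 1 := (Homeomorph.refl (Fin 1)).prodCongr h

/-- The Grigorchuk generator `σ` (flips the first letter). -/
def gσ : C 1 ≃ₜ C 1 := liftC1 (GS.homeo .s)
/-- The Grigorchuk generator `b`. -/
def gb : C 1 ≃ₜ C 1 := liftC1 (GS.homeo .b)
/-- The Grigorchuk generator `c`. -/
def gc : C 1 ≃ₜ C 1 := liftC1 (GS.homeo .c)
/-- The Grigorchuk generator `d`. -/
def gd : C 1 ≃ₜ C 1 := liftC1 (GS.homeo .d)

/-- The group of self-homeomorphisms of `C n`, with `(f * g) x = f (g x)`. -/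
instance homeoGroup (n : ℕ) : Group (C n ≃ₜ C n) where
  mul f g := g.trans f
  one := Homeomorph.refl _
  inv := Homeomorph.symm
  mul_assoc a b c := rfl
  one_mul a := rfl
  mul_one a := rfl
  inv_mul_cancel a := Homeomorph.self_trans_symm a

/-- The first Grigorchuk group `𝒢 = ⟨σ, b, c, d⟩`. -/
def Grig : Subgroup (C 1 ≃ₜ C 1) :=
  Subgroup.closure {gσ, gb, gc, gd}

/-- The set `K = {1, b, c, d}` of homeomorphisms of `C 1`. -/
def Kset : Set (C 1 ≃ₜ C 1) := {Homeomorph.refl (C 1), gb, gc, gd}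

/-- The `n`-fold direct sum `k₁ ⊕ ⋯ ⊕ k_n` of homeomorphisms of `C 1`. -/
def dsumFam : {n : ℕ} → (Fin n → (C 1 ≃ₜ C 1)) → (C n ≃ₜ C n)
  | 0, _ => Homeomorph.refl _
  | n + 1, k => dsum (dsumFam (fun i : Fin n => k i.castSucc)) (k (Fin.last n))

/-- The direct sum `h₁ ⊕ ⋯ ⊕ h_n` of a family of homeomorphisms
`h i : C 1 ≃ₜ C (m i)`. -/
def dsumFamH : {n : ℕ} → {m : Fin n → ℕ} → (∀ i, C 1 ≃ₜ C (m i)) →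
    (C n ≃ₜ C (∑ i, m i))
  | 0, _, _ => castC (by simp)
  | n + 1, m, h =>
      (dsum (dsumFamH (fun i : Fin n => h i.castSucc)) (h (Fin.last n))).trans
        (castC (Fin.sum_univ_castSucc m).symm)

/-- The group `K_n = {p_α ∘ (k₁ ⊕ ⋯ ⊕ k_n) : α ∈ S_n, kᵢ ∈ K}`. -/
def Kn (n : ℕ) : Set (C n ≃ₜ C n) :=
  {h | ∃ (α : Equiv.Perm (Fin n)) (k : Fin n → (C 1 ≃ₜ C 1)),
    (∀ i, k i ∈ Kset) ∧ h = (dsumFam k).trans (permC α)}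

/-- `σ_j : C m ≃ₜ C m`, acting as `σ` on the `(j+1)`-st copy (zero-indexed `j`)
of the Cantor set and as the identity elsewhere. -/
def sigmaAt {m : ℕ} (j : Fin m) : C m ≃ₜ C m :=
  dsumFam (fun i => if i = j then gσ else Homeomorph.refl (C 1))

/-- Membership in the groupoid `𝔙` generated by all split homeomorphisms and
all permutation homeomorphisms. -/
inductive InV : ∀ {m n : ℕ}, (C m ≃ₜ C n) → Prop where
  | split {n : ℕ} (i : Fin n) : InV (splitAt i)
  | perm {n : ℕ} (α : Equiv.Perm (Fin n)) : InV (permC α)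
  | comp {m n p : ℕ} {f : C m ≃ₜ C n} {g : C n ≃ₜ C p} :
      InV f → InV g → InV (f.trans g)
  | inv {m n : ℕ} {f : C m ≃ₜ C n} : InV f → InV f.symm

/-- Membership in Röver's groupoid `𝔙𝒢`, generated by `𝔙` together with the
elements of the Grigorchuk group `𝒢`. -/
inductive InVG : ∀ {m n : ℕ}, (C m ≃ₜ C n) → Prop where
  | split {n : ℕ} (i : Fin n) : InVG (splitAt i)
  | perm {n : ℕ} (α : Equiv.Perm (Fin n)) : InVG (permC α)
  | grig {g : C 1 ≃ₜ C 1} : g ∈ Grig → InVG g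
  | comp {m n p : ℕ} {f : C m ≃ₜ C n} {g : C n ≃ₜ C p} :
      InVG f → InVG g → InVG (f.trans g)
  | inv {m n : ℕ} {f : C m ≃ₜ C n} : InVG f → InVG f.symm

/-- The coset `[f] = K_n f = {k ∘ f : k ∈ K_n}` of `f : C 1 ≃ₜ C n`. -/
def coset {n : ℕ} (f : C 1 ≃ₜ C n) : Set (C 1 ≃ₜ C n) :=
  {h | ∃ k ∈ Kn n, h = f.trans k}

/-- The ambient type for vertices of the poset `𝒫`: a rank `n` together with
a set of homeomorphisms `C 1 ≃ₜ C n`. -/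
def PP : Type := Σ n : ℕ, Set (C 1 ≃ₜ C n)

/-- A member of `PP` is a vertex of `𝒫` if it is the coset `[f] = K_n f` of
some `f : C 1 ≃ₜ C n` in Röver's groupoid. -/
def IsVert (v : PP) : Prop :=
  ∃ f : C 1 ≃ₜ C v.1, InVG f ∧ v.2 = coset f

/-- `w` is a splitting of `v` if `v = [f]` and `w = [x_i ∘ f]` for some
representative `f` and some index `i`. -/
def SplittingOf (v w : PP) : Prop :=
  ∃ (n : ℕ) (f : C 1 ≃ₜ C n) (i : Fin n), InVG f ∧
    v = ⟨n, coset f⟩ ∧ w = ⟨n + 1, coset (f.trans (splitAt i))⟩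

/-- `w` is an expansion of `v` (written `v ≤ w`): `w` is obtained from `v` by
a finite (possibly empty) sequence of splittings. -/
def Expansion : PP → PP → Prop := Relation.ReflTransGen SplittingOf

/-- The four possible elementary pieces `1, x, σ₁ ∘ x, x₁ ∘ x` (with their
ranks), used to define elementary expansions. -/
def elemSet : Set (Σ m : ℕ, (C 1 ≃ₜ C m)) :=
  {⟨1, Homeomorph.refl (C 1)⟩, ⟨2, split⟩,
   ⟨2, split.trans (sigmaAt (0 : Fin 2))⟩,
   ⟨3, split.trans (splitAt (0 : Fin 2))⟩}

/-- `w` is an elementary expansion of `v`: `v = [f]` and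
`w = [(u₁ ⊕ ⋯ ⊕ u_n) ∘ f]` where each `uᵢ ∈ {1, x, σ₁∘x, x₁∘x}`. -/
def ElemExp (v w : PP) : Prop :=
  ∃ (n : ℕ) (f : C 1 ≃ₜ C n) (m : Fin n → ℕ) (h : ∀ i, C 1 ≃ₜ C (m i)),
    InVG f ∧ (∀ i, (⟨m i, h i⟩ : Σ m : ℕ, (C 1 ≃ₜ C m)) ∈ elemSet) ∧
    v = ⟨n, coset f⟩ ∧ w = ⟨∑ i, m i, coset (f.trans (dsumFamH h))⟩

/-! ### Auxiliary machinery for the stabilizer theorem -/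

section Aux

open Homeomorph

lemma GS.stArr_e (w : Δ) : ∀ n, GS.stArr .e w n = .e
  | 0 => rfl
  | n+1 => by rw [GS.stArr, GS.stArr_e w n]; rfl

lemma GS.act_e (w : Δ) : GS.act .e w = w := by
  funext n; rw [GS.act, GS.stArr_e]; rfl

lemma GS.stArr_succ (g : GS) (w : Δ) :
    ∀ n, GS.stArr g w (n+1) = GS.stArr (g.step (w 0)) (fun k => w (k+1)) n
  | 0 => rfl
  | n+1 => by rw [GS.stArr, GS.stArr_succ g w n]; rfl

lemma GS.act_succ (g : GS) (w : Δ) (n : ℕ) :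
    GS.act g w (n+1) = GS.act (g.step (w 0)) (fun k => w (k+1)) n := by
  rw [GS.act, GS.act, GS.stArr_succ]

lemma GS.act_tail (g : GS) (w : Δ) :
    (fun k => GS.act g w (k+1)) = GS.act (g.step (w 0)) (fun k => w (k+1)) := by
  funext k; rw [GS.act_succ]

/-- The set of "good" triples `(p, q, r)`: reading any word, the composite of
the actions of `p` after `q` equals the action of `r`. -/
def Good (p q r : GS) : Prop :=
  (p, q, r) ∈ ([(.b, .b, .e), (.b, .c, .d), (.b, .d, .c), (.b, .e, .b),
    (.c, .b, .d), (.c, .c, .e), (.c, .d, .b), (.c, .e, .c),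
    (.d, .b, .c), (.d, .c, .b), (.d, .d, .e), (.d, .e, .d),
    (.e, .b, .b), (.e, .c, .c), (.e, .d, .d), (.e, .e, .e),
    (.e, .s, .s), (.s, .e, .s), (.s, .s, .e)] : List (GS × GS × GS))

instance (p q r : GS) : Decidable (Good p q r) := by unfold Good; infer_instance

lemma Good.out' : ∀ (p q r : GS), Good p q r → ∀ i, p.out (q.out i) = r.out i := by decide

lemma Good.step' : ∀ (p q r : GS), Good p q r →
    ∀ i, Good (p.step (q.out i)) (q.step i) (r.step i) := by decide

lemma Good.stArr' (p q r : GS) (w : Δ) (h : Good p q r) :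
    ∀ n, Good (GS.stArr p (GS.act q w) n) (GS.stArr q w n) (GS.stArr r w n)
  | 0 => h
  | n+1 => by
      have h2 := Good.step' _ _ _ (Good.stArr' p q r w h n) (w n)
      exact h2

lemma Good.act (p q r : GS) (h : Good p q r) (w : Δ) :
    GS.act p (GS.act q w) = GS.act r w := by
  funext n
  exact Good.out' _ _ _ (Good.stArr' p q r w h n) (w n)

/-- Klein-four multiplication on automaton states (junk on `s`). -/
def kmul : GS → GS → GS
  | .e, q => q
  | p, .e => p
  | .b, .b => .e
  | .b, .c => .d
  | .b, .d => .c
  | .c, .b => .d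
  | .c, .c => .e
  | .c, .d => .b
  | .d, .b => .c
  | .d, .c => .b
  | .d, .d => .e
  | _, _ => .e

lemma kmul_good : ∀ p q : GS, p ≠ .s → q ≠ .s →
    Good p q (kmul p q) ∧ kmul p q ≠ .s := by decide

lemma kmul_self : ∀ p : GS, p ≠ .s → kmul p p = .e := by decide

end Aux
section Aux2

/-- The action of a self-homeomorphism of `C 1` on the Cantor set. -/
def act1 (h : C 1 ≃ₜ C 1) (w : Δ) : Δ := (h (0, w)).2

lemma apply_eq_act1 (h : C 1 ≃ₜ C 1) (i : Fin 1) (w : Δ) : h (i, w) = (i, act1 h w) := by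
  have : i = 0 := Subsingleton.elim _ _
  subst this
  exact Prod.ext (Subsingleton.elim _ _) rfl

lemma act1_trans (a b : C 1 ≃ₜ C 1) (w : Δ) :
    act1 (a.trans b) w = act1 b (act1 a w) := by
  unfold act1
  rw [Homeomorph.trans_apply, apply_eq_act1 a]

lemma act1_refl (w : Δ) : act1 (Homeomorph.refl (C 1)) w = w := rfl

lemma act1_injective {a b : C 1 ≃ₜ C 1} (h : ∀ w, act1 a w = act1 b w) : a = b := by
  apply Homeomorph.ext
  rintro ⟨i, w⟩
  rw [apply_eq_act1, apply_eq_act1, h]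

lemma act1_symm_act1 (a : C 1 ≃ₜ C 1) (w : Δ) : act1 a.symm (act1 a w) = w := by
  unfold act1
  have h : ((0 : Fin 1), (a (0, w)).2) = a (0, w) := Prod.ext (Subsingleton.elim _ _) rfl
  rw [h, Homeomorph.symm_apply_apply]

def gk (g : GS) : C 1 ≃ₜ C 1 := liftC1 (GS.homeo g)

lemma act1_gk (g : GS) (w : Δ) : act1 (gk g) w = GS.act g w := rfl

lemma gk_trans {p q r : GS} (h : Good q p r) : (gk p).trans (gk q) = gk r := by
  apply act1_injective
  intro w
  rw [act1_trans, act1_gk, act1_gk, act1_gk, Good.act _ _ _ h]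

lemma gk_e : gk .e = Homeomorph.refl (C 1) := by
  apply act1_injective
  intro w
  rw [act1_gk, GS.act_e, act1_refl]

lemma gb_eq : gb = gk .b := rfl
lemma gc_eq : gc = gk .c := rfl
lemma gd_eq : gd = gk .d := rfl
lemma gs_eq : gσ = gk .s := rfl

lemma mem_Kset_iff {k : C 1 ≃ₜ C 1} : k ∈ Kset ↔ ∃ g : GS, g ≠ GS.s ∧ k = gk g := by
  constructor
  · intro h
    rcases h with h | h | h | h
    · exact ⟨.e, by simp, by rw [h, gk_e]⟩
    · exact ⟨.b, by simp, h⟩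
    · exact ⟨.c, by simp, h⟩
    · exact ⟨.d, by simp, h⟩
  · rintro ⟨g, hg, rfl⟩
    cases g with
    | e => rw [gk_e]; left; rfl
    | s => exact absurd rfl hg
    | b => right; left; rfl
    | c => right; right; left; rfl
    | d => right; right; right; rfl

lemma Kset_refl : Homeomorph.refl (C 1) ∈ Kset := Or.inl rfl

lemma Kset_trans {k1 k2 : C 1 ≃ₜ C 1} (h1 : k1 ∈ Kset) (h2 : k2 ∈ Kset) :
    k1.trans k2 ∈ Kset := by
  rcases mem_Kset_iff.1 h1 with ⟨g1, hg1, rfl⟩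
  rcases mem_Kset_iff.1 h2 with ⟨g2, hg2, rfl⟩
  obtain ⟨hG, hs⟩ := kmul_good g2 g1 hg2 hg1
  exact mem_Kset_iff.2 ⟨kmul g2 g1, hs, gk_trans hG⟩

lemma symm_eq_self {X : Type} [TopologicalSpace X] {h : X ≃ₜ X}
    (hh : ∀ x, h (h x) = x) : h.symm = h := by
  apply Homeomorph.ext
  intro x
  apply h.toEquiv.injective
  show h (h.symm x) = h (h x)
  rw [Homeomorph.apply_symm_apply, hh]

lemma Kset_symm_eq {k : C 1 ≃ₜ C 1} (h : k ∈ Kset) : k.symm = k := by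
  rcases mem_Kset_iff.1 h with ⟨g, hg, rfl⟩
  apply symm_eq_self
  intro x
  have h1 : (gk g).trans (gk g) = Homeomorph.refl (C 1) := by
    rw [gk_trans ((kmul_good g g hg hg).1), kmul_self g hg, gk_e]
  have := congrArg (fun (F : C 1 ≃ₜ C 1) => F x) h1
  simpa using this

lemma Kset_symm {k : C 1 ≃ₜ C 1} (h : k ∈ Kset) : k.symm ∈ Kset := by
  rw [Kset_symm_eq h]; exact h

end Aux2
section Aux3

lemma permC_apply {n : ℕ} (α : Equiv.Perm (Fin n)) (i : Fin n) (w : Δ) :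
    permC α (i, w) = (α i, w) := rfl

lemma castC_apply {m n : ℕ} (h : m = n) (i : Fin m) (w : Δ) :
    castC h (i, w) = (Fin.cast h i, w) := rfl

lemma toSum_castAdd (m n : ℕ) (i : Fin m) (w : Δ) :
    toSum m n (Fin.castAdd n i, w) = Sum.inl (i, w) := by
  show Homeomorph.sumProdDistrib (finSumFinEquiv.symm (Fin.castAdd n i), w) = _
  rw [finSumFinEquiv_symm_apply_castAdd]
  rfl

lemma toSum_natAdd (m n : ℕ) (i : Fin n) (w : Δ) :
    toSum m n (Fin.natAdd m i, w) = Sum.inr (i, w) := by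
  show Homeomorph.sumProdDistrib (finSumFinEquiv.symm (Fin.natAdd m i), w) = _
  rw [finSumFinEquiv_symm_apply_natAdd]
  rfl

lemma toSum_symm_inl (m n : ℕ) (p : C m) :
    (toSum m n).symm (Sum.inl p) = (Fin.castAdd n p.1, p.2) := by
  have h : Sum.inl p = toSum m n (Fin.castAdd n p.1, p.2) := (toSum_castAdd m n p.1 p.2).symm
  rw [h, Homeomorph.symm_apply_apply]

lemma toSum_symm_inr (m n : ℕ) (p : C n) :
    (toSum m n).symm (Sum.inr p) = (Fin.natAdd m p.1, p.2) := by
  have h : Sum.inr p = toSum m n (Fin.natAdd m p.1, p.2) := (toSum_natAdd m n p.1 p.2).symm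
  rw [h, Homeomorph.symm_apply_apply]

lemma dsum_apply_left {m m' n n' : ℕ} (f : C m ≃ₜ C m') (g : C n ≃ₜ C n')
    (i : Fin m) (w : Δ) :
    dsum f g (Fin.castAdd n i, w) = (Fin.castAdd n' (f (i, w)).1, (f (i, w)).2) := by
  show (toSum m' n').symm ((f.sumCongr g) (toSum m n (Fin.castAdd n i, w))) = _
  rw [toSum_castAdd]
  show (toSum m' n').symm (Sum.inl (f (i, w))) = _
  rw [toSum_symm_inl]

lemma dsum_apply_right {m m' n n' : ℕ} (f : C m ≃ₜ C m') (g : C n ≃ₜ C n')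
    (i : Fin n) (w : Δ) :
    dsum f g (Fin.natAdd m i, w) = (Fin.natAdd m' (g (i, w)).1, (g (i, w)).2) := by
  show (toSum m' n').symm ((f.sumCongr g) (toSum m n (Fin.natAdd m i, w))) = _
  rw [toSum_natAdd]
  show (toSum m' n').symm (Sum.inr (g (i, w))) = _
  rw [toSum_symm_inr]

lemma split_apply (i : Fin 1) (w : Δ) :
    split (i, w) = (finTwoEquiv.symm (w 0), fun k => w (k + 1)) := rfl

/-- The inner part of `splitAt`, applied below the `a`-th copy. -/
lemma dsum3_apply_lt {a b : ℕ} (x : Fin (a + 1 + b)) (w : Δ) (h : x.val < a) :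
    dsum (dsum (Homeomorph.refl (C a)) split) (Homeomorph.refl (C b)) (x, w)
      = (⟨x.val, by omega⟩, w) := by
  have hx : x = Fin.castAdd b (Fin.castAdd 1 ⟨x.val, h⟩) := Fin.ext rfl
  rw [hx, dsum_apply_left, dsum_apply_left]
  rfl

lemma dsum3_apply_eq {a b : ℕ} (x : Fin (a + 1 + b)) (w : Δ) (h : x.val = a) :
    dsum (dsum (Homeomorph.refl (C a)) split) (Homeomorph.refl (C b)) (x, w)
      = (⟨a + (if w 0 then 1 else 0), lt_of_le_of_lt (Nat.add_le_add_left (show (if w 0 then 1 else 0) <= 1 by cases w 0 <;> simp) a) (Nat.lt_add_right b (Nat.lt_succ_self (a + 1)))⟩, fun k => w (k + 1)) := by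
  have hx : x = Fin.castAdd b (Fin.natAdd a (⟨0, Nat.zero_lt_one⟩ : Fin 1)) := by
    apply Fin.ext; simpa using h
  rw [hx, dsum_apply_left, dsum_apply_right, split_apply]
  refine Prod.ext (Fin.ext ?_) rfl
  show a + (finTwoEquiv.symm (w 0)).val = a + (if w 0 then 1 else 0)
  cases hw : w 0 <;> rfl

lemma dsum3_apply_gt {a b : ℕ} (x : Fin (a + 1 + b)) (w : Δ) (h : a < x.val) :
    dsum (dsum (Homeomorph.refl (C a)) split) (Homeomorph.refl (C b)) (x, w)
      = (⟨x.val + 1, by have := x.isLt; omega⟩, w) := by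
  have hx : x = Fin.natAdd (a + 1) ⟨x.val - (a + 1), by have := x.isLt; omega⟩ := by
    apply Fin.ext; simp; omega
  rw [hx, dsum_apply_right]
  refine Prod.ext (Fin.ext ?_) rfl
  simp only [Homeomorph.refl_apply, Fin.coe_natAdd, id_eq]
  omega

lemma splitAt_apply_lt {n : ℕ} (j i : Fin n) (w : Δ) (h : i.val < j.val) :
    splitAt j (i, w) = (i.castSucc, w) := by
  rw [splitAt]
  simp only [Homeomorph.trans_apply, castC_apply]
  rw [dsum3_apply_lt _ w (by simpa using h)]
  exact Prod.ext (Fin.ext rfl) rfl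

lemma splitAt_apply_eq {n : ℕ} (j : Fin n) (w : Δ) :
    splitAt j (j, w) = ((if w 0 then j.succ else j.castSucc), fun k => w (k + 1)) := by
  rw [splitAt]
  simp only [Homeomorph.trans_apply, castC_apply]
  rw [dsum3_apply_eq _ w (by simp)]
  refine Prod.ext (Fin.ext ?_) rfl
  cases hw : w 0 <;> simp [hw, castC_apply]

lemma splitAt_apply_gt {n : ℕ} (j i : Fin n) (w : Δ) (h : j.val < i.val) :
    splitAt j (i, w) = (i.succ, w) := by
  rw [splitAt]
  simp only [Homeomorph.trans_apply, castC_apply]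
  rw [dsum3_apply_gt _ w (by simpa using h)]
  exact Prod.ext (Fin.ext rfl) rfl

end Aux3
section Aux4

lemma dsumFam_apply : ∀ {n : ℕ} (k : Fin n → (C 1 ≃ₜ C 1)) (i : Fin n) (w : Δ),
    dsumFam k (i, w) = (i, act1 (k i) w) := by
  intro n
  induction n with
  | zero => exact fun k i => i.elim0
  | succ m ih =>
    intro k i w
    rcases Nat.lt_or_ge i.val m with h | h
    · have key := dsum_apply_left (dsumFam fun j => k j.castSucc) (k (Fin.last m)) ⟨i.val, h⟩ w
      rw [ih] at key
      dsimp only at key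
      have hi : i = Fin.castAdd 1 ⟨i.val, h⟩ := Fin.ext rfl
      rw [hi]
      show dsum (dsumFam fun j => k j.castSucc) (k (Fin.last m)) (Fin.castAdd 1 ⟨i.val, h⟩, w) = _
      rw [key]
      exact Prod.ext rfl rfl
    · have key := dsum_apply_right (dsumFam fun j => k j.castSucc) (k (Fin.last m))
        (⟨0, Nat.zero_lt_one⟩ : Fin 1) w
      rw [apply_eq_act1] at key
      dsimp only at key
      have hlast : i = Fin.last m := by apply Fin.ext; have := i.isLt; simp; omega
      rw [hlast]
      show dsum (dsumFam fun j => k j.castSucc) (k (Fin.last m)) (Fin.natAdd m ⟨0, Nat.zero_lt_one⟩, w) = _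
      rw [key]
      exact Prod.ext rfl rfl

/-- The homeomorphism of `C n` acting as `k` on the `j`-th copy and trivially
elsewhere. -/
def atPos {n : ℕ} (j : Fin n) (k : C 1 ≃ₜ C 1) : C n ≃ₜ C n :=
  dsumFam (fun i => if i = j then k else Homeomorph.refl (C 1))

lemma atPos_apply {n : ℕ} (j : Fin n) (k : C 1 ≃ₜ C 1) (i : Fin n) (w : Δ) :
    atPos j k (i, w) = (i, if i = j then act1 k w else w) := by
  rw [atPos, dsumFam_apply]
  by_cases h : i = j <;> simp [h, act1_refl]

lemma sigmaAt_eq_atPos {n : ℕ} (j : Fin n) : sigmaAt j = atPos j gσ := rfl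

end Aux4
section Aux5

lemma fin_ne_of_val_ne {n : ℕ} {a b : Fin n} (h : a.val ≠ b.val) : a ≠ b :=
  fun e => h (congrArg Fin.val e)

lemma GS.act_zero (g : GS) (hg : g ≠ .s) (w : Δ) : GS.act g w 0 = w 0 := by
  cases g <;> first | rfl | exact absurd rfl hg

lemma rel_perm {n : ℕ} (α : Equiv.Perm (Fin n)) (i : Fin n) (k : C 1 ≃ₜ C 1) :
    (permC α).trans (atPos (α i) k) = (atPos i k).trans (permC α) := by
  apply Homeomorph.ext; rintro ⟨i0, w⟩
  simp only [Homeomorph.trans_apply, permC_apply, atPos_apply]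
  by_cases h : i0 = i
  · subst h; rw [if_pos rfl, if_pos rfl]
  · rw [if_neg (fun e => h (α.injective e)), if_neg h]

lemma rel_comm {n : ℕ} (j i : Fin n) (hij : i ≠ j) (k : C 1 ≃ₜ C 1) :
    (atPos i k).trans (splitAt j)
      = (splitAt j).trans (atPos (if i.val < j.val then i.castSucc else i.succ) k) := by
  have hvij : i.val ≠ j.val := fun e => hij (Fin.ext e)
  apply Homeomorph.ext; rintro ⟨i0, w⟩
  simp only [Homeomorph.trans_apply, atPos_apply]
  rcases Nat.lt_trichotomy i0.val j.val with h0 | h0 | h0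
  · rw [splitAt_apply_lt j i0 _ h0, splitAt_apply_lt j i0 w h0, atPos_apply]
    split_ifs <;> first | rfl | (exfalso; simp_all [Fin.ext_iff] <;> omega)
  · obtain rfl : i0 = j := Fin.ext h0
    rw [splitAt_apply_eq, splitAt_apply_eq, atPos_apply]
    split_ifs <;> first | rfl | (exfalso; simp_all [Fin.ext_iff] <;> omega)
  · rw [splitAt_apply_gt j i0 _ h0, splitAt_apply_gt j i0 w h0, atPos_apply]
    split_ifs <;> first | rfl | (exfalso; simp_all [Fin.ext_iff] <;> omega)

lemma rel_sigma {n : ℕ} (j : Fin n) :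
    (atPos j (gk .s)).trans (splitAt j)
      = (splitAt j).trans (permC (Equiv.swap j.castSucc j.succ)) := by
  apply Homeomorph.ext; rintro ⟨i0, w⟩
  simp only [Homeomorph.trans_apply, atPos_apply]
  rcases Nat.lt_trichotomy i0.val j.val with h0 | h0 | h0
  · rw [if_neg (fin_ne_of_val_ne (by omega)), splitAt_apply_lt j i0 w h0, permC_apply,
      Equiv.swap_apply_of_ne_of_ne (fin_ne_of_val_ne (by simp; omega))
        (fin_ne_of_val_ne (by simp; omega))]
  · obtain rfl : i0 = j := Fin.ext h0
    rw [if_pos rfl, splitAt_apply_eq, splitAt_apply_eq, permC_apply]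
    have h1 : act1 (gk GS.s) w 0 = !(w 0) := rfl
    have h2 : (fun k => act1 (gk GS.s) w (k + 1)) = fun k => w (k + 1) := by
      funext k
      show GS.act .s w (k + 1) = w (k + 1)
      rw [GS.act_succ]
      show GS.act .e (fun k => w (k + 1)) k = w (k + 1)
      rw [GS.act_e]
    rw [h1, h2]
    cases hw : w 0
    · simp [hw, Equiv.swap_apply_left]
    · simp [hw, Equiv.swap_apply_right]
  · rw [if_neg (fin_ne_of_val_ne (by omega)), splitAt_apply_gt j i0 w h0, permC_apply,
      Equiv.swap_apply_of_ne_of_ne (fin_ne_of_val_ne (by simp; omega))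
        (fin_ne_of_val_ne (by simp; omega))]

lemma rel_step {n : ℕ} (j : Fin n) (g : GS) (hg : g ≠ .s) :
    (atPos j (gk g)).trans (splitAt j)
      = (splitAt j).trans
          ((atPos j.castSucc (gk (g.step false))).trans (atPos j.succ (gk (g.step true)))) := by
  apply Homeomorph.ext; rintro ⟨i0, w⟩
  simp only [Homeomorph.trans_apply, atPos_apply]
  rcases Nat.lt_trichotomy i0.val j.val with h0 | h0 | h0
  · rw [if_neg (fin_ne_of_val_ne (by omega)), splitAt_apply_lt j i0 w h0]
    simp only [atPos_apply]
    split_ifs <;> first | rfl | (exfalso; simp_all [Fin.ext_iff] <;> omega)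
  · obtain rfl : i0 = j := Fin.ext h0
    rw [if_pos rfl, splitAt_apply_eq, splitAt_apply_eq]
    have h1 : act1 (gk g) w 0 = w 0 := GS.act_zero g hg w
    have h2 : (fun k => act1 (gk g) w (k + 1))
        = GS.act (g.step (w 0)) (fun k => w (k + 1)) := by
      funext k
      show GS.act g w (k + 1) = _
      rw [GS.act_succ]
    rw [h1, h2]
    cases hw : w 0 <;>
      simp only [Bool.false_eq_true, eq_self_iff_true, if_false, if_true, atPos_apply] <;>
      split_ifs <;>
      first | rfl | (exfalso; simp_all [Fin.ext_iff] <;> omega)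
  · rw [if_neg (fin_ne_of_val_ne (by omega)), splitAt_apply_gt j i0 w h0]
    simp only [atPos_apply]
    split_ifs <;> first | rfl | (exfalso; simp_all [Fin.ext_iff] <;> omega)

end Aux5
section Aux6

lemma permC_one {n : ℕ} : permC (1 : Equiv.Perm (Fin n)) = Homeomorph.refl (C n) :=
  Homeomorph.ext fun _ => rfl

lemma InVG_refl (n : ℕ) : InVG (Homeomorph.refl (C n)) := by
  have h := InVG.perm (1 : Equiv.Perm (Fin n))
  rwa [permC_one] at h

/-- Extract the right factor from a commutation relation. -/
lemma conj_left {m m' : ℕ} {A : C m ≃ₜ C m} {S : C m ≃ₜ C m'} {B : C m' ≃ₜ C m'}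
    (h : A.trans S = S.trans B) : B = (S.symm.trans A).trans S := by
  apply Homeomorph.ext; intro x
  have hx := congrArg (fun (F : C m ≃ₜ C m') => F (S.symm x)) h
  simp only [Homeomorph.trans_apply] at hx ⊢
  rw [Homeomorph.apply_symm_apply] at hx
  exact hx.symm

/-- Extract the left factor from a commutation relation. -/
lemma conj_right {m m' : ℕ} {A : C m ≃ₜ C m} {S : C m ≃ₜ C m'} {B : C m' ≃ₜ C m'}
    (h : A.trans S = S.trans B) : A = (S.trans B).trans S.symm := by
  apply Homeomorph.ext; intro x
  have hx := congrArg (fun (F : C m ≃ₜ C m') => F x) h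
  simp only [Homeomorph.trans_apply] at hx ⊢
  rw [← hx, Homeomorph.symm_apply_apply]

lemma InVG_cancel_left {a : ℕ} {A B : C a ≃ₜ C a} (hA : InVG A)
    (h : InVG (A.trans B)) : InVG B := by
  have hB : B = A.symm.trans (A.trans B) := by
    apply Homeomorph.ext; intro x
    simp only [Homeomorph.trans_apply, Homeomorph.symm_apply_apply, Homeomorph.apply_symm_apply]
  rw [hB]
  exact InVG.comp (InVG.inv hA) h

lemma atPos_sigma_InVG {n : ℕ} (j : Fin n) : InVG (atPos j (gk .s)) := by
  have h := conj_right (rel_sigma j)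
  rw [h]
  exact InVG.comp (InVG.comp (InVG.split j) (InVG.perm _)) (InVG.inv (InVG.split j))

lemma atPos_gke {n : ℕ} (j : Fin n) : atPos j (gk .e) = Homeomorph.refl (C n) := by
  apply Homeomorph.ext; rintro ⟨i, w⟩
  rw [atPos_apply]
  by_cases h : i = j
  · rw [if_pos h, act1_gk, GS.act_e]; rfl
  · rw [if_neg h]; rfl

lemma atPos_C1 (j : Fin 1) (k : C 1 ≃ₜ C 1) : atPos j k = k := by
  apply Homeomorph.ext; rintro ⟨i, w⟩
  rw [atPos_apply, if_pos (Subsingleton.elim _ _), apply_eq_act1]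

/-- Positions can be moved by permutations. -/
lemma atPos_move {n : ℕ} {i : Fin n} {k : C 1 ≃ₜ C 1} (h : InVG (atPos i k))
    (i' : Fin n) : InVG (atPos i' k) := by
  have hrel := rel_perm (Equiv.swap i i') i k
  rw [Equiv.swap_apply_left] at hrel
  have heq := conj_left hrel.symm
  rw [heq]
  exact InVG.comp (InVG.comp (InVG.inv (InVG.perm _)) h) (InVG.perm _)

lemma gkmem_Grig (g : GS) (hg : g ≠ .s) : gk g ∈ Grig := by
  cases g with
  | e => rw [gk_e]; exact one_mem _
  | s => exact absurd rfl hg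
  | b => exact Subgroup.subset_closure (by right; left; rfl)
  | c => exact Subgroup.subset_closure (by right; right; left; rfl)
  | d => exact Subgroup.subset_closure (by right; right; right; rfl)

/-- The key lemma: each element of `K` acting on a single copy is in `𝔙𝒢`. -/
lemma atPos_InVG : ∀ (n : ℕ) (j : Fin n) (g : GS), g ≠ .s → InVG (atPos j (gk g)) := by
  intro n
  induction n with
  | zero => exact fun j => j.elim0
  | succ m ih =>
    cases m with
    | zero =>
      intro j g hg
      rw [atPos_C1]
      exact InVG.grig (gkmem_Grig g hg)
    | succ m' =>
      cases m' with
      | zero =>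
        -- rank 2
        have hM : ∀ g0 : GS, g0 ≠ .s →
            InVG ((atPos ((0 : Fin 1).castSucc) (gk (g0.step false))).trans
              (atPos ((0 : Fin 1).succ) (gk (g0.step true)))) := by
          intro g0 hg0
          have h := conj_left (rel_step (0 : Fin 1) g0 hg0)
          rw [h]
          refine InVG.comp (InVG.comp (InVG.inv (InVG.split _)) ?_) (InVG.split _)
          rw [atPos_C1]
          exact InVG.grig (gkmem_Grig g0 hg0)
        have hb : InVG (atPos ((0 : Fin 1).succ) (gk .b)) := by
          refine InVG_cancel_left (A := atPos ((0 : Fin 1).castSucc) (gk .e)) ?_ (hM .d (by simp))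
          rw [atPos_gke]
          exact InVG_refl _
        have hc : InVG (atPos ((0 : Fin 1).succ) (gk .c)) :=
          InVG_cancel_left (atPos_sigma_InVG _) (hM .b (by simp))
        have hd : InVG (atPos ((0 : Fin 1).succ) (gk .d)) :=
          InVG_cancel_left (atPos_sigma_InVG _) (hM .c (by simp))
        intro j g hg
        cases g with
        | e => rw [atPos_gke]; exact InVG_refl _
        | s => exact absurd rfl hg
        | b => exact atPos_move hb j
        | c => exact atPos_move hc j
        | d => exact atPos_move hd j
      | succ l =>
        -- rank at least 3
        intro j g hg
        have hne : (Fin.last (l + 1) : Fin (l + 2)) ≠ (0 : Fin (l + 2)) :=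
          fin_ne_of_val_ne (by simp)
        have h := conj_left (rel_comm (0 : Fin (l + 2)) (Fin.last (l + 1)) hne (gk g))
        have h2 : InVG (atPos (if (Fin.last (l + 1) : Fin (l + 2)).val
            < ((0 : Fin (l + 2))).val then (Fin.last (l + 1) : Fin (l + 2)).castSucc
            else (Fin.last (l + 1) : Fin (l + 2)).succ) (gk g)) := by
          rw [h]
          exact InVG.comp (InVG.comp (InVG.inv (InVG.split _))
            (ih (Fin.last (l + 1)) g hg)) (InVG.split _)
        exact atPos_move h2 j

lemma atPos_Kset_InVG {n : ℕ} (j : Fin n) {k : C 1 ≃ₜ C 1} (hk : k ∈ Kset) :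
    InVG (atPos j k) := by
  rcases mem_Kset_iff.1 hk with ⟨g, hg, rfl⟩
  exact atPos_InVG n j g hg

end Aux6
section Aux7

lemma dsumFam_refl {n : ℕ} : dsumFam (fun _ : Fin n => Homeomorph.refl (C 1))
    = Homeomorph.refl (C n) := by
  apply Homeomorph.ext; rintro ⟨i, w⟩
  rw [dsumFam_apply, act1_refl]; rfl

lemma dsumFam_InVG_aux (n : ℕ) : ∀ (m : ℕ) (k : Fin n → (C 1 ≃ₜ C 1)),
    (∀ i, k i ∈ Kset) → (∀ i : Fin n, m ≤ i.val → k i = Homeomorph.refl (C 1)) →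
    InVG (dsumFam k) := by
  intro m
  induction m with
  | zero =>
    intro k _ hbd
    have : dsumFam k = Homeomorph.refl (C n) := by
      apply Homeomorph.ext; rintro ⟨i, w⟩
      rw [dsumFam_apply, hbd i (Nat.zero_le _), act1_refl]; rfl
    rw [this]; exact InVG_refl n
  | succ m ih =>
    intro k hk hbd
    by_cases hm : m < n
    · set k' : Fin n → (C 1 ≃ₜ C 1) := fun i => if i.val = m then Homeomorph.refl (C 1) else k i with hk'
      have h1 : InVG (dsumFam k') := by
        refine ih k' (fun i => ?_) (fun i hi => ?_)
        · by_cases h : i.val = m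
          · simp only [hk', if_pos h]; exact Kset_refl
          · simp only [hk', if_neg h]; exact hk i
        · by_cases h : i.val = m
          · simp only [hk', if_pos h]
          · simp only [hk', if_neg h]; exact hbd i (by omega)
      have h2 : dsumFam k = (dsumFam k').trans (atPos ⟨m, hm⟩ (k ⟨m, hm⟩)) := by
        apply Homeomorph.ext; rintro ⟨i, w⟩
        rw [Homeomorph.trans_apply, dsumFam_apply, dsumFam_apply, atPos_apply]
        by_cases h : i.val = m
        · have hi : i = ⟨m, hm⟩ := Fin.ext h
          rw [hi, if_pos rfl]
          have hk'i : k' (⟨m, hm⟩ : Fin n) = Homeomorph.refl (C 1) := by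
            simp [hk']
          rw [hk'i, act1_refl]
        · rw [if_neg (fun e => h (congrArg Fin.val e))]
          simp only [hk', if_neg h]
      rw [h2]
      exact InVG.comp h1 (atPos_Kset_InVG _ (hk ⟨m, hm⟩))
    · exact ih k hk (fun i _ => hbd i (by have := i.isLt; omega))

lemma dsumFam_InVG {n : ℕ} (k : Fin n → (C 1 ≃ₜ C 1)) (hk : ∀ i, k i ∈ Kset) :
    InVG (dsumFam k) :=
  dsumFam_InVG_aux n n k hk (fun i hi => absurd i.isLt (by omega))

lemma Kn_InVG {n : ℕ} {h : C n ≃ₜ C n} (hh : h ∈ Kn n) : InVG h := by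
  obtain ⟨α, k, hk, rfl⟩ := hh
  exact InVG.comp (dsumFam_InVG k hk) (InVG.perm α)

lemma Kn_one (n : ℕ) : Homeomorph.refl (C n) ∈ Kn n := by
  refine ⟨1, fun _ => Homeomorph.refl (C 1), fun _ => Kset_refl, ?_⟩
  rw [dsumFam_refl, permC_one]
  exact (Homeomorph.ext fun _ => rfl)

lemma Kn_mul {n : ℕ} {h1 h2 : C n ≃ₜ C n} (m1 : h1 ∈ Kn n) (m2 : h2 ∈ Kn n) :
    h1.trans h2 ∈ Kn n := by
  obtain ⟨α, k, hk, rfl⟩ := m1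
  obtain ⟨β, k', hk', rfl⟩ := m2
  refine ⟨α.trans β, fun i => (k i).trans (k' (α i)), fun i => Kset_trans (hk i) (hk' (α i)), ?_⟩
  apply Homeomorph.ext; rintro ⟨i, w⟩
  simp only [Homeomorph.trans_apply, dsumFam_apply, permC_apply, act1_trans]
  rfl

lemma symm_eq_of_trans_eq_refl {a b : ℕ} {F : C a ≃ₜ C b} {G : C b ≃ₜ C a}
    (h : F.trans G = Homeomorph.refl (C a)) : F.symm = G := by
  apply Homeomorph.ext; intro x
  have hx := congrArg (fun (Φ : C a ≃ₜ C a) => Φ (F.symm x)) h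
  simp only [Homeomorph.trans_apply, Homeomorph.refl_apply,
    Homeomorph.apply_symm_apply] at hx
  exact hx.symm

lemma Kn_symm {n : ℕ} {h : C n ≃ₜ C n} (m : h ∈ Kn n) : h.symm ∈ Kn n := by
  obtain ⟨α, k, hk, rfl⟩ := m
  refine ⟨α.symm, fun i => (k (α.symm i)).symm, fun i => Kset_symm (hk (α.symm i)), ?_⟩
  have key : ((dsumFam k).trans (permC α)).trans
      ((dsumFam fun i => (k (α.symm i)).symm).trans (permC α.symm)) = Homeomorph.refl (C n) := by
    apply Homeomorph.ext; rintro ⟨i, w⟩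
    simp only [Homeomorph.trans_apply, dsumFam_apply, permC_apply]
    have hi : α.symm (α i) = i := Equiv.symm_apply_apply α i
    rw [hi, act1_symm_act1]
    rfl
  exact symm_eq_of_trans_eq_refl key

end Aux7
section Aux8

/-- Two test points separating the four elements of `K`. -/
def wA : Δ := fun _ => false
def wB : Δ := fun k => decide (k = 0)

lemma gk_inj {g g' : GS} (hg : g ≠ .s) (hg' : g' ≠ .s) (h : gk g = gk g') : g = g' := by
  have h1 : GS.act g wA 1 = GS.act g' wA 1 :=
    congrArg (fun F : C 1 ≃ₜ C 1 => (F ((0 : Fin 1), wA)).2 1) h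
  have h2 : GS.act g wB 2 = GS.act g' wB 2 :=
    congrArg (fun F : C 1 ≃ₜ C 1 => (F ((0 : Fin 1), wB)).2 2) h
  cases g <;> cases g' <;>
    first
      | rfl
      | exact absurd rfl hg
      | exact absurd rfl hg'
      | exact absurd h1 (by decide)
      | exact absurd h2 (by decide)

def st4 : Fin 4 → GS := ![.e, .b, .c, .d]

def e4 : Fin 4 → (C 1 ≃ₜ C 1) := fun t => gk (st4 t)

lemma st4_ne_s : ∀ t, st4 t ≠ .s := by decide

lemma e4_mem (t : Fin 4) : e4 t ∈ Kset := mem_Kset_iff.2 ⟨st4 t, st4_ne_s t, rfl⟩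

lemma e4_surj {k : C 1 ≃ₜ C 1} (hk : k ∈ Kset) : ∃ t, e4 t = k := by
  rcases mem_Kset_iff.1 hk with ⟨g, hg, rfl⟩
  cases g with
  | e => exact ⟨0, rfl⟩
  | s => exact absurd rfl hg
  | b => exact ⟨1, rfl⟩
  | c => exact ⟨2, rfl⟩
  | d => exact ⟨3, rfl⟩

lemma e4_inj : Function.Injective e4 := by
  intro a b h
  have h2 := gk_inj (st4_ne_s a) (st4_ne_s b) h
  have key : ∀ a b : Fin 4, st4 a = st4 b → a = b := by decide
  exact key a b h2

/-- The parametrization of the stabilizer subgroup. -/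
def PhiMap (n : ℕ) (f : C 1 ≃ₜ C n) :
    (Equiv.Perm (Fin n)) × (Fin n → Fin 4) → (C 1 ≃ₜ C 1) :=
  fun p => (f.trans ((dsumFam (fun i => e4 (p.2 i))).trans (permC p.1))).trans f.symm

lemma conj_inj {n : ℕ} (f : C 1 ≃ₜ C n) {k k' : C n ≃ₜ C n}
    (h : (f.trans k).trans f.symm = (f.trans k').trans f.symm) : k = k' := by
  apply Homeomorph.ext; intro x
  have hx := congrArg (fun (F : C 1 ≃ₜ C 1) => f (F (f.symm x))) h
  simp only [Homeomorph.trans_apply, Homeomorph.apply_symm_apply] at hx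
  exact hx

lemma PhiMap_inj (n : ℕ) (f : C 1 ≃ₜ C n) : Function.Injective (PhiMap n f) := by
  intro p q h
  have hk := conj_inj f h
  have hα : p.1 = q.1 := by
    apply Equiv.ext; intro i
    have hx := congrArg (fun (F : C n ≃ₜ C n) => (F (i, wA)).1) hk
    simp only [Homeomorph.trans_apply, dsumFam_apply, permC_apply] at hx
    exact hx
  have ht : p.2 = q.2 := by
    funext i
    apply e4_inj
    apply act1_injective; intro w
    have hx := congrArg (fun (F : C n ≃ₜ C n) => (F (i, w)).2) hk
    simp only [Homeomorph.trans_apply, dsumFam_apply, permC_apply] at hx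
    exact hx
  exact Prod.ext hα ht

lemma PhiMap_range (n : ℕ) (f : C 1 ≃ₜ C n) :
    {g : C 1 ≃ₜ C 1 | ∃ k ∈ Kn n, g = (f.trans k).trans f.symm}
      = Set.range (PhiMap n f) := by
  ext g
  simp only [Set.mem_setOf_eq, Set.mem_range]
  constructor
  · rintro ⟨k, ⟨α, kk, hkk, rfl⟩, rfl⟩
    have hchoice : ∀ i, ∃ t, e4 t = kk i := fun i => e4_surj (hkk i)
    choose t ht using hchoice
    refine ⟨(α, t), ?_⟩
    show (f.trans ((dsumFam (fun i => e4 (t i))).trans (permC α))).trans f.symm = _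
    rw [funext ht]
  · rintro ⟨p, rfl⟩
    exact ⟨(dsumFam (fun i => e4 (p.2 i))).trans (permC p.1),
      ⟨p.1, fun i => e4 (p.2 i), fun i => e4_mem _, rfl⟩, rfl⟩

end Aux8
theorem vertex_stabilizer (n : ℕ) (f : C 1 ≃ₜ C n) (hf : InVG f) :
    ({g : C 1 ≃ₜ C 1 | InVG g ∧ coset (g.trans f) = coset f}
      = {g : C 1 ≃ₜ C 1 | ∃ k ∈ Kn n, g = (f.trans k).trans f.symm}) ∧
    Set.Finite {g : C 1 ≃ₜ C 1 | ∃ k ∈ Kn n, g = (f.trans k).trans f.symm} ∧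
    Set.ncard {g : C 1 ≃ₜ C 1 | ∃ k ∈ Kn n, g = (f.trans k).trans f.symm}
      = n.factorial * 4 ^ n := by
  refine ⟨?_, ?_, ?_⟩
  · ext g
    simp only [Set.mem_setOf_eq]
    constructor
    · rintro ⟨hg, hc⟩
      have hmem : g.trans f ∈ coset (g.trans f) :=
        ⟨Homeomorph.refl (C n), Kn_one n, (Homeomorph.ext fun _ => rfl)⟩
      rw [hc] at hmem
      obtain ⟨k, hk, he⟩ := hmem
      refine ⟨k, hk, ?_⟩
      apply Homeomorph.ext; intro x
      have hx := congrArg (fun (F : C 1 ≃ₜ C n) => f.symm (F x)) he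
      simp only [Homeomorph.trans_apply] at hx ⊢
      rwa [Homeomorph.symm_apply_apply] at hx
    · rintro ⟨k, hk, rfl⟩
      constructor
      · exact InVG.comp (InVG.comp hf (Kn_InVG hk)) (InVG.inv hf)
      · have he : ((f.trans k).trans f.symm).trans f = f.trans k := by
          apply Homeomorph.ext; intro x
          simp only [Homeomorph.trans_apply, Homeomorph.apply_symm_apply]
        rw [he]
        ext h
        simp only [coset, Set.mem_setOf_eq]
        constructor
        · rintro ⟨k', hk', rfl⟩
          exact ⟨k.trans k', Kn_mul hk hk', Homeomorph.ext fun _ => rfl⟩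
        · rintro ⟨k'', hk'', rfl⟩
          refine ⟨k.symm.trans k'', Kn_mul (Kn_symm hk) hk'', ?_⟩
          apply Homeomorph.ext; intro x
          simp only [Homeomorph.trans_apply, Homeomorph.apply_symm_apply,
            Homeomorph.symm_apply_apply]
  · rw [PhiMap_range n f]
    exact Set.finite_range _
  · rw [PhiMap_range n f, ← Nat.card_coe_set_eq,
      Nat.card_range_of_injective (PhiMap_inj n f), Nat.card_eq_fintype_card]
    simp [Fintype.card_perm]
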